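/- Let P_X be a pmf on 𝒳, let W be a random variable on 𝒲 = {−m_x, …, m_s}, let Y be drawn given W by a conditional pmf b with b(𝒴₀(W) | W) = 1, let X₂ ~ P_X be independent of the pair (W, Y), and set S₂ = W + Y (so S₂ ∈ 𝒮) and W₂ = S₂ − X₂. Then I(W; Y) + H(W₂ | Y) − H(W) ≥ J*, where J* = min over pmfs θ on 𝒮 of [H(S̃ − X̃) − H(S̃)] for independent X̃ ~ P_X, S̃ ~ θ. -/
import Mathlib


open Finset
open scoped Classical

namespace SmartMeter

/-! ### Basic information measures for finitely supported distributions.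
All entropies and mutual informations are in bits (base-2 logarithms). -/

/-- Probability that the random variable `Z` takes the value `z` under the pmf `p`. -/
noncomputable def pr {Ω α : Type*} [Fintype Ω] [DecidableEq α]
    (p : Ω → ℝ) (Z : Ω → α) (z : α) : ℝ :=
  ∑ ω ∈ Finset.univ.filter (fun ω => Z ω = z), p ω

/-- Shannon entropy (in bits) of the random variable `Z` under the pmf `p`. -/
noncomputable def ent {Ω α : Type*} [Fintype Ω] [DecidableEq α]
    (p : Ω → ℝ) (Z : Ω → α) : ℝ :=
  -∑ z ∈ Finset.univ.image Z, pr p Z z * Real.logb 2 (pr p Z z)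

/-- Mutual information `I(A; B)`. -/
noncomputable def mutInfo {Ω α β : Type*} [Fintype Ω] [DecidableEq α] [DecidableEq β]
    (p : Ω → ℝ) (A : Ω → α) (B : Ω → β) : ℝ :=
  ent p A + ent p B - ent p (fun ω => (A ω, B ω))

/-- Conditional entropy `H(A | C)`. -/
noncomputable def condEnt {Ω α γ : Type*} [Fintype Ω] [DecidableEq α] [DecidableEq γ]
    (p : Ω → ℝ) (A : Ω → α) (C : Ω → γ) : ℝ :=
  ent p (fun ω => (A ω, C ω)) - ent p C

/-- Conditional mutual information `I(A; B | C)`. -/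
noncomputable def condMutInfo {Ω α β γ : Type*} [Fintype Ω] [DecidableEq α] [DecidableEq β]
    [DecidableEq γ] (p : Ω → ℝ) (A : Ω → α) (B : Ω → β) (C : Ω → γ) : ℝ :=
  ent p (fun ω => (A ω, C ω)) + ent p (fun ω => (B ω, C ω))
    - ent p (fun ω => (A ω, B ω, C ω)) - ent p C

/-- `p` is a probability mass function on the finite type `Ω`. -/
def IsPMF {Ω : Type*} [Fintype Ω] (p : Ω → ℝ) : Prop :=
  (∀ ω, 0 ≤ p ω) ∧ ∑ ω, p ω = 1

/-- Extension of a pmf on `{0, …, n}` to an integer-indexed function (zero out of range). -/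
noncomputable def extZ {n : ℕ} (f : Fin (n + 1) → ℝ) (k : ℤ) : ℝ :=
  if h : 0 ≤ k ∧ k ≤ (n : ℤ) then f ⟨k.toNat, by omega⟩ else 0

/-! ### The single-letter quantity `J*` -/

/-- `I(S - X; X)` for independent `X ~ PX` on `{0,…,mx}` and `S ~ θ` on `{0,…,ms}`. -/
noncomputable def iidMI (mx ms : ℕ) (PX : Fin (mx + 1) → ℝ) (θ : Fin (ms + 1) → ℝ) : ℝ :=
  mutInfo (fun ω : Fin (mx + 1) × Fin (ms + 1) => PX ω.1 * θ ω.2)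
    (fun ω => ((ω.2 : ℕ) : ℤ) - ((ω.1 : ℕ) : ℤ)) (fun ω => ω.1)

/-- `J* = min over pmfs θ on 𝒮 of I(S - X; X)`. -/
noncomputable def Jstar (mx ms : ℕ) (PX : Fin (mx + 1) → ℝ) : ℝ :=
  sInf {r : ℝ | ∃ θ : Fin (ms + 1) → ℝ, IsPMF θ ∧ iidMI mx ms PX θ = r}

/-! ### The structured policy `b*` -/

/-- `ξ(w) = Σ_{(x,s) : s - x = w} PX(x) θ(s)`, the pmf of `W = S - X`. -/
noncomputable def xiOf (mx ms : ℕ) (PX : Fin (mx + 1) → ℝ) (θ : Fin (ms + 1) → ℝ)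
    (w : ℤ) : ℝ :=
  ∑ x : Fin (mx + 1), ∑ s : Fin (ms + 1),
    if ((s : ℕ) : ℤ) - ((x : ℕ) : ℤ) = w then PX x * θ s else 0

/-- The structured policy with respect to `(θ, ξ)`:
`b(y|w) = PX(y) θ(y + w) / ξ(w)` for `y ∈ 𝒳 ∩ 𝒴₀(w)` (when `ξ(w) > 0`), else `0`. -/
noncomputable def bstar (mx my ms : ℕ) (PX : Fin (mx + 1) → ℝ) (θ : Fin (ms + 1) → ℝ)
    (w : ℤ) (y : Fin (my + 1)) : ℝ :=
  if xiOf mx ms PX θ w = 0 then 0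
  else extZ PX ((y : ℕ) : ℤ) * extZ θ (((y : ℕ) : ℤ) + w) / xiOf mx ms PX θ w

/-! ### Trajectory spaces, policies and induced joint laws.
Time is indexed from `0`; `ω = (s₁, x, y)` records the initial battery state `S₁ = ω.1`,
the demands `X_{t+1} = ω.2.1 t` and the outputs `Y_{t+1} = ω.2.2 t` for `t = 0, …, T-1`. -/

/-- Trajectories of horizon `T`. -/
abbrev Traj (mx my ms T : ℕ) :=
  Fin (ms + 1) × (Fin T → Fin (mx + 1)) × (Fin T → Fin (my + 1))

variable {mx my ms T : ℕ}

/-- Demand at (0-based) time `t`, as an integer (junk value `0` for `t ≥ T`). -/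
def Xat (ω : Traj mx my ms T) (t : ℕ) : ℤ :=
  if h : t < T then ((ω.2.1 ⟨t, h⟩ : ℕ) : ℤ) else 0

/-- Output at (0-based) time `t`, as an integer (junk value `0` for `t ≥ T`). -/
def Yat (ω : Traj mx my ms T) (t : ℕ) : ℤ :=
  if h : t < T then ((ω.2.2 ⟨t, h⟩ : ℕ) : ℤ) else 0

/-- Battery state at (0-based) time `t`: `S_{t+1} = S_t + Y_t - X_t`, `Sat ω 0 = S₁`. -/
def Sat (ω : Traj mx my ms T) (t : ℕ) : ℤ :=
  ((ω.1 : ℕ) : ℤ) + ∑ i ∈ Finset.range t, (Yat ω i - Xat ω i)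

/-- `W_t = S_t - X_t`. -/
def Wat (ω : Traj mx my ms T) (t : ℕ) : ℤ := Sat ω t - Xat ω t

/-- A general causal (class `Q_A`) randomized battery policy:
`q_t(y_t | x^t, s^t, y^{t-1})`; since `s^t` is determined by `(s₁, x^{t-1}, y^{t-1})`,
the policy is a function of `(x^t, s₁, y^{t-1})`. -/
def PolicyA (mx my ms : ℕ) : Type :=
  (t : ℕ) → (Fin (t + 1) → Fin (mx + 1)) → Fin (ms + 1) → (Fin t → Fin (my + 1)) →
    Fin (my + 1) → ℝ

/-- A class-`Q_B` policy: `q_t(y_t | x_t, s_t, y^{t-1})`. -/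
def PolicyB (mx my ms : ℕ) : Type :=
  (t : ℕ) → Fin (mx + 1) → ℤ → (Fin t → Fin (my + 1)) → Fin (my + 1) → ℝ

/-- The battery state `S_t` computed from `s₁` and the history `(x^t, y^{t-1})`. -/
def hstate {t : ℕ} (s1 : Fin (ms + 1)) (x : Fin (t + 1) → Fin (mx + 1))
    (y : Fin t → Fin (my + 1)) : ℤ :=
  ((s1 : ℕ) : ℤ) + ∑ i : Fin t, (((y i : ℕ) : ℤ) - ((x i.castSucc : ℕ) : ℤ))

/-- Each `q_t(· | x^t, s^t, y^{t-1})` is a pmf on `𝒴`. -/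
def CondPMFA (q : PolicyA mx my ms) : Prop :=
  ∀ (t : ℕ) (x : Fin (t + 1) → Fin (mx + 1)) (s1 : Fin (ms + 1)) (y : Fin t → Fin (my + 1)),
    (∀ yt, 0 ≤ q t x s1 y yt) ∧ ∑ yt, q t x s1 y yt = 1

/-- Feasibility of a class-`Q_A` policy: conditional pmfs supported on
`𝒴₀(s_t - x_t) = {y ∈ 𝒴 : s_t - x_t + y ∈ 𝒮}`. -/
def FeasibleA (q : PolicyA mx my ms) : Prop :=
  CondPMFA q ∧
  ∀ (t : ℕ) (x : Fin (t + 1) → Fin (mx + 1)) (s1 : Fin (ms + 1)) (y : Fin t → Fin (my + 1)),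
    ∀ yt, q t x s1 y yt ≠ 0 →
      0 ≤ hstate s1 x y - ((x (Fin.last t) : ℕ) : ℤ) + ((yt : ℕ) : ℤ) ∧
      hstate s1 x y - ((x (Fin.last t) : ℕ) : ℤ) + ((yt : ℕ) : ℤ) ≤ (ms : ℤ)

/-- Each `q_t(· | x_t, s_t, y^{t-1})` is a pmf on `𝒴`. -/
def CondPMFB (q : PolicyB mx my ms) : Prop :=
  ∀ (t : ℕ) (xt : Fin (mx + 1)) (s : ℤ) (y : Fin t → Fin (my + 1)),
    (∀ yt, 0 ≤ q t xt s y yt) ∧ ∑ yt, q t xt s y yt = 1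

/-- Feasibility of a class-`Q_B` policy. -/
def FeasibleB (q : PolicyB mx my ms) : Prop :=
  CondPMFB q ∧
  ∀ (t : ℕ) (xt : Fin (mx + 1)) (s : ℤ) (y : Fin t → Fin (my + 1)),
    0 ≤ s → s ≤ (ms : ℤ) →
    ∀ yt, q t xt s y yt ≠ 0 →
      0 ≤ s - ((xt : ℕ) : ℤ) + ((yt : ℕ) : ℤ) ∧
      s - ((xt : ℕ) : ℤ) + ((yt : ℕ) : ℤ) ≤ (ms : ℤ)

/-- The demand prefix `x^t = (x_0, …, x_t)` of a trajectory. -/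
def prefX (ω : Traj mx my ms T) (t : Fin T) : Fin ((t : ℕ) + 1) → Fin (mx + 1) :=
  fun i => ω.2.1 ⟨(i : ℕ), lt_of_le_of_lt (Nat.lt_succ_iff.mp i.isLt) t.isLt⟩

/-- The output prefix `y^{t-1} = (y_0, …, y_{t-1})` of a trajectory. -/
def prefY (ω : Traj mx my ms T) (t : Fin T) : Fin (t : ℕ) → Fin (my + 1) :=
  fun i => ω.2.2 ⟨(i : ℕ), i.isLt.trans t.isLt⟩

/-- Joint law on trajectories induced by i.i.d. demand `PX`, initial battery pmf `PS1`
(independent of the demand), and a class-`Q_A` policy `q`. -/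
noncomputable def jointA (PS1 : Fin (ms + 1) → ℝ) (PX : Fin (mx + 1) → ℝ)
    (q : PolicyA mx my ms) (T : ℕ) (ω : Traj mx my ms T) : ℝ :=
  PS1 ω.1 * ∏ t : Fin T,
    (PX (ω.2.1 t) * q (t : ℕ) (prefX ω t) ω.1 (prefY ω t) (ω.2.2 t))

/-- Weight of a demand trajectory under a Markov chain `(PX1, Qm)`. -/
noncomputable def markovWt (PX1 : Fin (mx + 1) → ℝ) (Qm : Fin (mx + 1) → Fin (mx + 1) → ℝ)
    {T : ℕ} (x : Fin T → Fin (mx + 1)) : ℝ :=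
  ∏ t : Fin T,
    if _h : (t : ℕ) = 0 then PX1 (x t)
    else Qm (x ⟨(t : ℕ) - 1, lt_of_le_of_lt (Nat.sub_le _ _) t.isLt⟩) (x t)

/-- Joint law on trajectories induced by Markov demand and a class-`Q_A` policy. -/
noncomputable def jointAMarkov (PS1 : Fin (ms + 1) → ℝ) (PX1 : Fin (mx + 1) → ℝ)
    (Qm : Fin (mx + 1) → Fin (mx + 1) → ℝ) (q : PolicyA mx my ms) (T : ℕ)
    (ω : Traj mx my ms T) : ℝ :=
  PS1 ω.1 * markovWt PX1 Qm ω.2.1 *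
    ∏ t : Fin T, q (t : ℕ) (prefX ω t) ω.1 (prefY ω t) (ω.2.2 t)

/-- Joint law on trajectories induced by Markov demand and a class-`Q_B` policy. -/
noncomputable def jointBMarkov (PS1 : Fin (ms + 1) → ℝ) (PX1 : Fin (mx + 1) → ℝ)
    (Qm : Fin (mx + 1) → Fin (mx + 1) → ℝ) (q : PolicyB mx my ms) (T : ℕ)
    (ω : Traj mx my ms T) : ℝ :=
  PS1 ω.1 * markovWt PX1 Qm ω.2.1 *
    ∏ t : Fin T, q (t : ℕ) (ω.2.1 t) (Sat ω (t : ℕ)) (prefY ω t) (ω.2.2 t)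

/-- The memoryless time-invariant policy `q_t(y | x, s) = b*(y | s - x)`, as a member of the
class of general causal policies. -/
noncomputable def structuredPolicyA (mx my ms : ℕ) (PX : Fin (mx + 1) → ℝ)
    (θ : Fin (ms + 1) → ℝ) : PolicyA mx my ms :=
  fun t x s1 y yt => bstar mx my ms PX θ (hstate s1 x y - ((x (Fin.last t) : ℕ) : ℤ)) yt


variable {Ω α β γ : Type*} [Fintype Ω] [DecidableEq α] [DecidableEq β] [DecidableEq γ]

lemma pr_eq_sum_ite (p : Ω → ℝ) (Z : Ω → α) (z : α) :
    pr p Z z = ∑ ω, if Z ω = z then p ω else 0 := Finset.sum_filter _ _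

lemma pr_nonneg {p : Ω → ℝ} (hp : ∀ ω, 0 ≤ p ω) (Z : Ω → α) (z : α) : 0 ≤ pr p Z z :=
  Finset.sum_nonneg fun ω _ => hp ω

lemma pr_le_one {p : Ω → ℝ} (hp : IsPMF p) (Z : Ω → α) (z : α) : pr p Z z ≤ 1 := by
  rw [← hp.2]
  exact Finset.sum_le_sum_of_subset_of_nonneg (Finset.subset_univ _) fun ω _ _ => hp.1 ω

lemma sum_pr (p : Ω → ℝ) (Z : Ω → α) {s : Finset α} (hs : ∀ ω, Z ω ∈ s) :
    ∑ z ∈ s, pr p Z z = ∑ ω, p ω := by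
  unfold pr
  exact Finset.sum_fiberwise_of_maps_to (fun ω _ => hs ω) p

lemma pr_eq_zero {p : Ω → ℝ} {Z : Ω → α} {z : α} (h : ∀ ω, Z ω ≠ z) : pr p Z z = 0 := by
  unfold pr
  rw [Finset.filter_false_of_mem (fun ω _ => h ω), Finset.sum_empty]

lemma ent_eq_sum (p : Ω → ℝ) (Z : Ω → α) {s : Finset α} (hs : ∀ ω, Z ω ∈ s) :
    ent p Z = -∑ z ∈ s, pr p Z z * Real.logb 2 (pr p Z z) := by
  unfold ent
  congr 1
  apply Finset.sum_subset
  · intro z hz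
    obtain ⟨ω, -, rfl⟩ := Finset.mem_image.mp hz
    exact hs ω
  · intro z _ hz
    have : pr p Z z = 0 := pr_eq_zero fun ω h => hz (Finset.mem_image.mpr ⟨ω, Finset.mem_univ _, h⟩)
    simp [this]

lemma pr_id (p : Ω → ℝ) [DecidableEq Ω] (ω₀ : Ω) : pr p (fun ω => ω) ω₀ = p ω₀ := by
  rw [pr_eq_sum_ite]
  simp

lemma pr_injective (p : Ω → ℝ) (g : Ω → γ) (hg : Function.Injective g) (ω₀ : Ω) :
    pr p g (g ω₀) = p ω₀ := by
  unfold pr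
  rw [show Finset.univ.filter (fun ω => g ω = g ω₀) = {ω₀} by
    ext ω; simp [hg.eq_iff]]
  exact Finset.sum_singleton _ _

lemma ent_injective (p : Ω → ℝ) (g : Ω → γ) (hg : Function.Injective g) :
    ent p g = -∑ ω, p ω * Real.logb 2 (p ω) := by
  unfold ent
  rw [Finset.sum_image (fun a _ b _ h => hg h)]
  congr 1
  exact Finset.sum_congr rfl fun ω _ => by rw [pr_injective p g hg ω]

lemma sum_if_const {α : Type*} [Fintype α] (c : Prop) [Decidable c] (f : α → ℝ) :
    (∑ x : α, if c then f x else 0) = if c then (∑ x, f x) else 0 := by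
  split <;> simp

lemma mul_logb_mul (a b : ℝ) :
    a * b * Real.logb 2 (a * b) = a * b * Real.logb 2 a + a * b * Real.logb 2 b := by
  rcases eq_or_ne a 0 with h | h
  · simp [h]
  rcases eq_or_ne b 0 with h' | h'
  · simp [h']
  rw [Real.logb_mul h h']
  ring

lemma neg_mul_logb_nonneg {x : ℝ} (h0 : 0 ≤ x) (h1 : x ≤ 1) : 0 ≤ -(x * Real.logb 2 x) := by
  rcases eq_or_lt_of_le h0 with h | h
  · simp [← h]
  have : Real.logb 2 x ≤ 0 := Real.logb_nonpos (by norm_num) h0 h1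
  nlinarith

lemma neg_mul_logb_le {x : ℝ} (h0 : 0 ≤ x) (h1 : x ≤ 1) :
    -(x * Real.logb 2 x) ≤ 1 / Real.log 2 := by
  have hl2 : 0 < Real.log 2 := Real.log_pos (by norm_num)
  rcases eq_or_lt_of_le h0 with h | h
  · simp [← h]; positivity
  have hlog : Real.log x⁻¹ ≤ x⁻¹ - 1 := Real.log_le_sub_one_of_pos (by positivity)
  rw [Real.log_inv] at hlog
  have hx : -(x * Real.log x) ≤ 1 - x := by
    have := mul_le_mul_of_nonneg_left hlog (le_of_lt h)
    rw [mul_sub, mul_inv_cancel₀ (ne_of_gt h)] at this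
    nlinarith
  rw [Real.logb]
  have : -(x * (Real.log x / Real.log 2)) = -(x * Real.log x) / Real.log 2 := by ring
  rw [this, div_le_div_iff₀ hl2 hl2]
  nlinarith

lemma sum_fin_ite (n : ℕ) (v : ℤ) (c : Fin (n + 1) → ℝ) :
    (∑ s : Fin (n + 1), if ((s : ℕ) : ℤ) = v then c s else 0)
      = if h : 0 ≤ v ∧ v ≤ (n : ℤ) then c ⟨v.toNat, by omega⟩ else 0 := by
  split
  · next h =>
    set s₀ : Fin (n + 1) := ⟨v.toNat, by omega⟩ with hs₀
    rw [Finset.sum_eq_single s₀]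
    · rw [if_pos]; simp [hs₀]; omega
    · intro s _ hne
      rw [if_neg]
      intro hv
      apply hne
      apply Fin.ext
      simp [hs₀]
      omega
    · simp
  · next h =>
    apply Finset.sum_eq_zero
    intro s _
    rw [if_neg]
    intro hv
    have := s.isLt
    omega




lemma ent_nonneg {Ω α : Type*} [Fintype Ω] [DecidableEq α] {p : Ω → ℝ} (hp : IsPMF p)
    (Z : Ω → α) : 0 ≤ ent p Z := by
  unfold ent
  rw [neg_nonneg]
  apply Finset.sum_nonpos
  intro z _
  have := neg_mul_logb_nonneg (pr_nonneg hp.1 Z z) (pr_le_one hp Z z)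
  linarith

lemma prod_isPMF {A B : Type*} [Fintype A] [Fintype B] {f : A → ℝ} {g : B → ℝ}
    (hf : IsPMF f) (hg : IsPMF g) : IsPMF (fun ω : A × B => f ω.1 * g ω.2) := by
  refine ⟨fun ω => mul_nonneg (hf.1 _) (hg.1 _), ?_⟩
  rw [Fintype.sum_prod_type]
  simp only [← Finset.mul_sum, hg.2, mul_one, hf.2]

set_option maxHeartbeats 2000000 in
lemma iidMI_eq (mx ms : ℕ) (PX : Fin (mx + 1) → ℝ) (hPX : IsPMF PX)
    (θ : Fin (ms + 1) → ℝ) (hθ : IsPMF θ) :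
    iidMI mx ms PX θ
      = ent (fun ω : Fin (mx + 1) × Fin (ms + 1) => PX ω.1 * θ ω.2)
          (fun ω => ((ω.2 : ℕ) : ℤ) - ((ω.1 : ℕ) : ℤ))
        + ∑ s, θ s * Real.logb 2 (θ s) := by
  unfold iidMI mutInfo
  set q : Fin (mx + 1) × Fin (ms + 1) → ℝ := fun ω => PX ω.1 * θ ω.2 with hq
  have hx : ent q (fun ω => ω.1) = -∑ x, PX x * Real.logb 2 (PX x) := by
    rw [ent_eq_sum q _ (fun ω => Finset.mem_univ (ω.1))]
    congr 1
    apply Finset.sum_congr rfl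
    intro x _
    have hpr : pr q (fun ω => ω.1) x = PX x := by
      rw [pr_eq_sum_ite, Fintype.sum_prod_type]
      have h1 : ∀ x' : Fin (mx + 1),
          (∑ s : Fin (ms + 1), if x' = x then q (x', s) else 0)
            = if x' = x then PX x' else 0 := by
        intro x'
        split
        · rw [hq]; simp only [← Finset.mul_sum, hθ.2, mul_one]
        · simp
      rw [Finset.sum_congr rfl fun x' _ => h1 x', Finset.sum_ite_eq' Finset.univ x PX,
        if_pos (Finset.mem_univ x)]
    rw [hpr]
  have hinj : Function.Injective (fun ω : Fin (mx + 1) × Fin (ms + 1) =>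
      ((((ω.2 : ℕ) : ℤ) - ((ω.1 : ℕ) : ℤ)), ω.1)) := by
    rintro ⟨x, s⟩ ⟨x', s'⟩ h
    simp only [Prod.mk.injEq] at h
    obtain ⟨h1, h2⟩ := h
    subst h2
    have : (s : ℕ) = (s' : ℕ) := by omega
    exact Prod.ext rfl (Fin.ext this)
  have hpair : ent q (fun ω : Fin (mx + 1) × Fin (ms + 1) =>
        ((((ω.2 : ℕ) : ℤ) - ((ω.1 : ℕ) : ℤ)), ω.1))
      = (-∑ x, PX x * Real.logb 2 (PX x)) + (-∑ s, θ s * Real.logb 2 (θ s)) := by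
    rw [ent_injective q _ hinj, Fintype.sum_prod_type]
    have hrow : ∀ x : Fin (mx + 1),
        (∑ s, q (x, s) * Real.logb 2 (q (x, s)))
          = PX x * Real.logb 2 (PX x) + PX x * (∑ s, θ s * Real.logb 2 (θ s)) := by
      intro x
      rw [hq]
      simp only []
      rw [Finset.sum_congr rfl fun s _ => mul_logb_mul (PX x) (θ s), Finset.sum_add_distrib]
      congr 1
      · rw [Finset.sum_congr rfl (fun s _ => by ring :
          ∀ s ∈ Finset.univ, PX x * θ s * Real.logb 2 (PX x)
            = (PX x * Real.logb 2 (PX x)) * θ s), ← Finset.mul_sum, hθ.2, mul_one]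
      · rw [Finset.sum_congr rfl (fun s _ => by ring :
          ∀ s ∈ Finset.univ, PX x * θ s * Real.logb 2 (θ s)
            = PX x * (θ s * Real.logb 2 (θ s))), ← Finset.mul_sum]
    rw [Finset.sum_congr rfl fun x _ => hrow x, Finset.sum_add_distrib, ← Finset.sum_mul,
      hPX.2, one_mul]
    ring
  rw [hx, hpair]
  ring

lemma iidMI_ge (mx ms : ℕ) (PX : Fin (mx + 1) → ℝ) (hPX : IsPMF PX)
    (θ : Fin (ms + 1) → ℝ) (hθ : IsPMF θ) :
    -(((ms : ℝ) + 1) / Real.log 2) ≤ iidMI mx ms PX θ := by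
  rw [iidMI_eq mx ms PX hPX θ hθ]
  have hq : IsPMF (fun ω : Fin (mx + 1) × Fin (ms + 1) => PX ω.1 * θ ω.2) :=
    prod_isPMF hPX hθ
  have h1 : 0 ≤ ent (fun ω : Fin (mx + 1) × Fin (ms + 1) => PX ω.1 * θ ω.2)
      (fun ω => ((ω.2 : ℕ) : ℤ) - ((ω.1 : ℕ) : ℤ)) := ent_nonneg hq _
  have h2 : -(((ms : ℝ) + 1) / Real.log 2) ≤ ∑ s, θ s * Real.logb 2 (θ s) := by
    have hterm : ∀ s : Fin (ms + 1), -(1 / Real.log 2) ≤ θ s * Real.logb 2 (θ s) := by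
      intro s
      have hle1 : θ s ≤ 1 := by
        rw [← hθ.2]
        exact Finset.single_le_sum (fun i _ => hθ.1 i) (Finset.mem_univ s)
      have := neg_mul_logb_le (hθ.1 s) hle1
      linarith
    calc -(((ms : ℝ) + 1) / Real.log 2)
        = ∑ _s : Fin (ms + 1), -(1 / Real.log 2) := by
          rw [Finset.sum_const, Finset.card_univ, Fintype.card_fin]
          push_cast
          ring
      _ ≤ ∑ s, θ s * Real.logb 2 (θ s) := Finset.sum_le_sum fun s _ => hterm s
  linarith

lemma Jstar_le (mx ms : ℕ) (PX : Fin (mx + 1) → ℝ) (hPX : IsPMF PX)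
    (θ : Fin (ms + 1) → ℝ) (hθ : IsPMF θ) :
    Jstar mx ms PX ≤ iidMI mx ms PX θ := by
  apply csInf_le
  · exact ⟨-(((ms : ℝ) + 1) / Real.log 2), by
      rintro r ⟨θ', hθ', rfl⟩
      exact iidMI_ge mx ms PX hPX θ' hθ'⟩
  · exact ⟨θ, hθ, rfl⟩

-- AUX MARKER2

/-- Dynamic-programming converse step: let `W` be a random variable on
`𝒲 = {-m_x, …, m_s}` (encoded by `i ↦ i - m_x` on `Fin (m_x + m_s + 1)`), let `Y | W ~ b`
with `b(𝒴₀(W) | W) = 1`, let `X₂ ~ P_X` be independent of `(W, Y)`, and set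
`S₂ = W + Y`, `W₂ = S₂ - X₂`.  Then `I(W; Y) + H(W₂ | Y) - H(W) ≥ J*`. -/
theorem dp_converse_step (mx my ms : ℕ) (hxy : mx ≤ my)
    (PX : Fin (mx + 1) → ℝ) (hPX : IsPMF PX)
    (ξ : Fin (mx + ms + 1) → ℝ) (hξ : IsPMF ξ)
    (b : Fin (mx + ms + 1) → Fin (my + 1) → ℝ) (hb : ∀ i, IsPMF (b i))
    (hsupp : ∀ (i : Fin (mx + ms + 1)) (y : Fin (my + 1)), b i y ≠ 0 →
      0 ≤ ((i : ℕ) : ℤ) - (mx : ℤ) + ((y : ℕ) : ℤ) ∧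
      ((i : ℕ) : ℤ) - (mx : ℤ) + ((y : ℕ) : ℤ) ≤ (ms : ℤ)) :
    let p : Fin (mx + ms + 1) × Fin (my + 1) × Fin (mx + 1) → ℝ :=
      fun ω => ξ ω.1 * b ω.1 ω.2.1 * PX ω.2.2
    let Wv : Fin (mx + ms + 1) × Fin (my + 1) × Fin (mx + 1) → ℤ :=
      fun ω => ((ω.1 : ℕ) : ℤ) - (mx : ℤ)
    let Yv : Fin (mx + ms + 1) × Fin (my + 1) × Fin (mx + 1) → Fin (my + 1) :=
      fun ω => ω.2.1
    let W2v : Fin (mx + ms + 1) × Fin (my + 1) × Fin (mx + 1) → ℤ :=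
      fun ω => Wv ω + ((ω.2.1 : ℕ) : ℤ) - ((ω.2.2 : ℕ) : ℤ)
    Jstar mx ms PX ≤ mutInfo p Wv Yv + condEnt p W2v Yv - ent p Wv := by
  intro p Wv Yv W2v
  classical
  -- the interval of possible values
  set I : Finset ℤ := Finset.Icc (-(my : ℤ) - mx) ((ms : ℤ) + my) with hI
  -- joint mass of (W = w, Y = y) and marginal of Y
  set Mf : Fin (my + 1) → ℤ → ℝ :=
    fun y w => ∑ i : Fin (mx + ms + 1), if ((i : ℕ) : ℤ) - (mx : ℤ) = w then ξ i * b i y else 0 with hMf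
  set PY : Fin (my + 1) → ℝ := fun y => ∑ i, ξ i * b i y with hPY
  set A : Fin (my + 1) → ℤ → ℝ :=
    fun y w => ∑ x, PX x * Mf y (w + ((x : ℕ) : ℤ) - ((y : ℕ) : ℤ)) with hA
  have hMnonneg : ∀ y w, 0 ≤ Mf y w := by
    intro y w
    apply Finset.sum_nonneg
    intro i _
    split
    · exact mul_nonneg (hξ.1 i) ((hb i).1 y)
    · exact le_rfl
  have hMzero : ∀ (y : Fin (my + 1)) (w : ℤ),
      (w + (y : ℤ) < 0 ∨ (ms : ℤ) < w + (y : ℤ)) → Mf y w = 0 := by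
    intro y w hw
    apply Finset.sum_eq_zero
    intro i _
    split
    · next h =>
      rcases eq_or_ne (b i y) 0 with hb0 | hb0
      · rw [hb0, mul_zero]
      · exfalso
        obtain ⟨h1, h2⟩ := hsupp i y hb0
        omega
    · rfl
  have hPYnn : ∀ y, 0 ≤ PY y :=
    fun y => Finset.sum_nonneg fun i _ => mul_nonneg (hξ.1 i) ((hb i).1 y)
  have hPYsum : ∑ y, PY y = 1 := by
    simp only [hPY]
    rw [Finset.sum_comm]
    calc (∑ i, ∑ y, ξ i * b i y) = ∑ i, ξ i := by
          apply Finset.sum_congr rfl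
          intro i _
          rw [← Finset.mul_sum, (hb i).2, mul_one]
      _ = 1 := hξ.2
  have hMsum : ∀ y, ∑ s : Fin (ms + 1), Mf y (((s : ℕ) : ℤ) - ((y : ℕ) : ℤ)) = PY y := by
    intro y
    simp only [hMf, hPY]
    rw [Finset.sum_comm]
    apply Finset.sum_congr rfl
    intro i _
    have hcond : ∀ s : Fin (ms + 1),
        (((i : ℕ) : ℤ) - (mx : ℤ) = ((s : ℕ) : ℤ) - ((y : ℕ) : ℤ))
          ↔ (((s : ℕ) : ℤ) = ((i : ℕ) : ℤ) - (mx : ℤ) + ((y : ℕ) : ℤ)) := by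
      intro s; constructor <;> intro <;> omega
    rw [Finset.sum_congr rfl fun s _ => if_congr (hcond s) rfl rfl,
      sum_fin_ite ms (((i : ℕ) : ℤ) - (mx : ℤ) + ((y : ℕ) : ℤ)) (fun _ => ξ i * b i y)]
    split
    · rfl
    · next h =>
      rcases eq_or_ne (b i y) 0 with hb0 | hb0
      · rw [hb0, mul_zero]
      · exfalso
        obtain ⟨h1, h2⟩ := hsupp i y hb0
        omega
  have hgoal : mutInfo p Wv Yv + condEnt p W2v Yv - ent p Wv
      = ent p (fun ω => (W2v ω, Yv ω)) - ent p (fun ω => (Wv ω, Yv ω)) := by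
    unfold mutInfo condEnt
    ring
  rw [hgoal]
  have hprWY : ∀ (w : ℤ) (y : Fin (my + 1)),
      pr p (fun ω => (Wv ω, Yv ω)) (w, y) = Mf y w := by
    intro w y
    rw [pr_eq_sum_ite]
    simp only [Fintype.sum_prod_type, Prod.mk.injEq, Wv, Yv, p]
    have h1 : ∀ (i : Fin (mx + ms + 1)) (y' : Fin (my + 1)),
        (∑ x : Fin (mx + 1),
          if (((i : ℕ) : ℤ) - (mx : ℤ) = w ∧ y' = y) then ξ i * b i y' * PX x else 0)
          = if (((i : ℕ) : ℤ) - (mx : ℤ) = w ∧ y' = y) then ξ i * b i y' else 0 := by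
      intro i y'
      rw [sum_if_const]
      split
      · rw [← Finset.mul_sum, hPX.2, mul_one]
      · rfl
    rw [Finset.sum_congr rfl fun i _ => Finset.sum_congr rfl fun y' _ => h1 i y']
    have h2 : ∀ i : Fin (mx + ms + 1),
        (∑ y' : Fin (my + 1),
          if (((i : ℕ) : ℤ) - (mx : ℤ) = w ∧ y' = y) then ξ i * b i y' else 0)
          = if ((i : ℕ) : ℤ) - (mx : ℤ) = w then ξ i * b i y else 0 := by
      intro i
      by_cases hc : ((i : ℕ) : ℤ) - (mx : ℤ) = w
      · have hiff : ∀ y' : Fin (my + 1),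
            ((((i : ℕ) : ℤ) - (mx : ℤ) = w ∧ y' = y)) ↔ y' = y := by
          intro y'; simp [hc]
        rw [Finset.sum_congr rfl fun y' _ => if_congr (hiff y') rfl rfl,
          Finset.sum_ite_eq' Finset.univ y (fun y' => ξ i * b i y'),
          if_pos (Finset.mem_univ y), if_pos hc]
      · simp [hc]
    rw [Finset.sum_congr rfl fun i _ => h2 i]
  have hprW2Y : ∀ (w : ℤ) (y : Fin (my + 1)),
      pr p (fun ω => (W2v ω, Yv ω)) (w, y) = A y w := by
    intro w y
    rw [pr_eq_sum_ite]
    simp only [Fintype.sum_prod_type, Prod.mk.injEq, W2v, Wv, Yv, p]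
    have h2 : ∀ i : Fin (mx + ms + 1),
        (∑ y' : Fin (my + 1), ∑ x : Fin (mx + 1),
          if (((i : ℕ) : ℤ) - (mx : ℤ) + ((y' : ℕ) : ℤ) - ((x : ℕ) : ℤ) = w ∧ y' = y)
            then ξ i * b i y' * PX x else 0)
          = ∑ x : Fin (mx + 1),
            if (((i : ℕ) : ℤ) - (mx : ℤ) + ((y : ℕ) : ℤ) - ((x : ℕ) : ℤ) = w)
              then ξ i * b i y * PX x else 0 := by
      intro i
      have hstep : ∀ y' : Fin (my + 1),
          (∑ x : Fin (mx + 1),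
            if (((i : ℕ) : ℤ) - (mx : ℤ) + ((y' : ℕ) : ℤ) - ((x : ℕ) : ℤ) = w ∧ y' = y)
              then ξ i * b i y' * PX x else 0)
            = if y' = y then
                (∑ x : Fin (mx + 1),
                  if (((i : ℕ) : ℤ) - (mx : ℤ) + ((y' : ℕ) : ℤ) - ((x : ℕ) : ℤ) = w)
                    then ξ i * b i y' * PX x else 0) else 0 := by
        intro y'
        by_cases hy : y' = y
        · simp only [hy, and_true, if_pos]
        · simp [hy]
      rw [Finset.sum_congr rfl fun y' _ => hstep y',
        Finset.sum_ite_eq' Finset.univ y, if_pos (Finset.mem_univ y)]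
    rw [Finset.sum_congr rfl fun i _ => h2 i, Finset.sum_comm]
    simp only [hA]
    apply Finset.sum_congr rfl
    intro x _
    have hiff : ∀ i : Fin (mx + ms + 1),
        ((((i : ℕ) : ℤ) - (mx : ℤ) + ((y : ℕ) : ℤ) - ((x : ℕ) : ℤ) = w))
          ↔ (((i : ℕ) : ℤ) - (mx : ℤ) = w + ((x : ℕ) : ℤ) - ((y : ℕ) : ℤ)) := by
      intro i; constructor <;> intro <;> omega
    rw [Finset.sum_congr rfl fun i _ => if_congr (hiff i) rfl rfl]
    simp only [hMf]
    rw [Finset.mul_sum]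
    apply Finset.sum_congr rfl
    intro i _
    split
    · ring
    · rw [mul_zero]
  have hrange1 : ∀ ω : Fin (mx + ms + 1) × Fin (my + 1) × Fin (mx + 1),
      (Wv ω, Yv ω) ∈ I ×ˢ (Finset.univ : Finset (Fin (my + 1))) := by
    intro ω
    rw [Finset.mem_product, hI, Finset.mem_Icc]
    have h1 := ω.1.isLt
    have h2 := ω.2.1.isLt
    refine ⟨⟨?_, ?_⟩, Finset.mem_univ _⟩ <;> simp only [Wv] <;> omega
  have hrange2 : ∀ ω : Fin (mx + ms + 1) × Fin (my + 1) × Fin (mx + 1),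
      (W2v ω, Yv ω) ∈ I ×ˢ (Finset.univ : Finset (Fin (my + 1))) := by
    intro ω
    rw [Finset.mem_product, hI, Finset.mem_Icc]
    have h1 := ω.1.isLt
    have h2 := ω.2.1.isLt
    have h3 := ω.2.2.isLt
    refine ⟨⟨?_, ?_⟩, Finset.mem_univ _⟩ <;> simp only [W2v, Wv] <;> omega
  have hE1 : ent p (fun ω => (Wv ω, Yv ω))
      = -∑ y, ∑ w ∈ I, Mf y w * Real.logb 2 (Mf y w) := by
    rw [ent_eq_sum p _ hrange1, Finset.sum_product, Finset.sum_comm]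
    congr 1
    exact Finset.sum_congr rfl fun y _ => Finset.sum_congr rfl fun w _ => by rw [hprWY w y]
  have hE2 : ent p (fun ω => (W2v ω, Yv ω))
      = -∑ y, ∑ w ∈ I, A y w * Real.logb 2 (A y w) := by
    rw [ent_eq_sum p _ hrange2, Finset.sum_product, Finset.sum_comm]
    congr 1
    exact Finset.sum_congr rfl fun y _ => Finset.sum_congr rfl fun w _ => by rw [hprW2Y w y]
  have key : ∀ y : Fin (my + 1),
      PY y * Jstar mx ms PX ≤
        (-∑ w ∈ I, A y w * Real.logb 2 (A y w))
          + ∑ w ∈ I, Mf y w * Real.logb 2 (Mf y w) := by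
    intro y
    rcases eq_or_lt_of_le (hPYnn y) with h0 | hpos
    · -- degenerate case `P(Y = y) = 0`
      have hbz : ∀ i, ξ i * b i y = 0 := by
        have hz := (Finset.sum_eq_zero_iff_of_nonneg
          (fun i _ => mul_nonneg (hξ.1 i) ((hb i).1 y))).mp h0.symm
        exact fun i => hz i (Finset.mem_univ i)
      have hM0 : ∀ w, Mf y w = 0 := by
        intro w
        apply Finset.sum_eq_zero
        intro i _
        split
        · exact hbz i
        · rfl
      have hA0 : ∀ w, A y w = 0 := by
        intro w
        apply Finset.sum_eq_zero
        intro x _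
        rw [hM0, mul_zero]
      simp [hA0, hM0, ← h0]
    · -- main case `P(Y = y) > 0`
      set θy : Fin (ms + 1) → ℝ :=
        fun s => Mf y (((s : ℕ) : ℤ) - ((y : ℕ) : ℤ)) / PY y with hθydef
      have hθpmf : IsPMF θy := by
        constructor
        · exact fun s => div_nonneg (hMnonneg _ _) hpos.le
        · simp only [hθydef]
          rw [← Finset.sum_div, hMsum y, div_self (ne_of_gt hpos)]
      set qy : Fin (mx + 1) × Fin (ms + 1) → ℝ := fun ω => PX ω.1 * θy ω.2 with hqy
      set Zv2 : Fin (mx + 1) × Fin (ms + 1) → ℤ :=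
        fun ω => ((ω.2 : ℕ) : ℤ) - ((ω.1 : ℕ) : ℤ) with hZv2
      have hRy : ∀ w : ℤ, pr qy Zv2 w = A y w / PY y := by
        intro w
        rw [pr_eq_sum_ite, Fintype.sum_prod_type]
        have hcol : ∀ x : Fin (mx + 1),
            (∑ s : Fin (ms + 1), if Zv2 (x, s) = w then qy (x, s) else 0)
              = PX x * Mf y (w + ((x : ℕ) : ℤ) - ((y : ℕ) : ℤ)) / PY y := by
          intro x
          have hiff : ∀ s : Fin (ms + 1),
              (Zv2 (x, s) = w) ↔ (((s : ℕ) : ℤ) = w + ((x : ℕ) : ℤ)) := by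
            intro s
            simp only [hZv2]
            constructor <;> intro <;> omega
          rw [Finset.sum_congr rfl fun s _ => if_congr (hiff s) rfl rfl,
            sum_fin_ite ms (w + ((x : ℕ) : ℤ)) (fun s => qy (x, s))]
          split
          · next h =>
            simp only [hqy, hθydef]
            rw [show ((((⟨(w + ((x : ℕ) : ℤ)).toNat, by omega⟩ : Fin (ms + 1)) : ℕ) : ℤ))
                = w + ((x : ℕ) : ℤ) from Int.toNat_of_nonneg h.1]
            rw [show w + ((x : ℕ) : ℤ) - ((y : ℕ) : ℤ)
                = w + ((x : ℕ) : ℤ) - ((y : ℕ) : ℤ) from rfl]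
            ring
          · next h =>
            rw [hMzero y (w + ((x : ℕ) : ℤ) - ((y : ℕ) : ℤ)) (by omega)]
            rw [mul_zero, zero_div]
        rw [Finset.sum_congr rfl fun x _ => hcol x, hA, ← Finset.sum_div]
      have hZrange : ∀ ω : Fin (mx + 1) × Fin (ms + 1), Zv2 ω ∈ I := by
        intro ω
        rw [hI, Finset.mem_Icc]
        have h1 := ω.1.isLt
        have h2 := ω.2.isLt
        simp only [hZv2]
        omega
      have hRysum : ∑ w ∈ I, pr qy Zv2 w = 1 := by
        rw [sum_pr qy Zv2 hZrange]
        exact (prod_isPMF hPX hθpmf).2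
      have hAR : ∀ w, A y w = PY y * pr qy Zv2 w := by
        intro w
        rw [hRy w]
        field_simp
      have hMθ : ∀ s : Fin (ms + 1),
          PY y * θy s = Mf y (((s : ℕ) : ℤ) - ((y : ℕ) : ℤ)) := by
        intro s
        simp only [hθydef]
        rw [mul_comm, div_mul_cancel₀ _ (ne_of_gt hpos)]
      have hMreindex : ∑ w ∈ I, Mf y w * Real.logb 2 (Mf y w)
          = ∑ s : Fin (ms + 1), (PY y * θy s) * Real.logb 2 (PY y * θy s) := by
        have hsub : Finset.univ.image
            (fun s : Fin (ms + 1) => ((s : ℕ) : ℤ) - ((y : ℕ) : ℤ)) ⊆ I := by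
          intro w hw
          rw [Finset.mem_image] at hw
          obtain ⟨s, -, rfl⟩ := hw
          rw [hI, Finset.mem_Icc]
          have h1 := s.isLt
          have h2 := y.isLt
          omega
        have himg : ∀ w ∈ I, w ∉ Finset.univ.image
            (fun s : Fin (ms + 1) => ((s : ℕ) : ℤ) - ((y : ℕ) : ℤ)) →
            Mf y w * Real.logb 2 (Mf y w) = 0 := by
          intro w _ hw
          have hM0 : Mf y w = 0 := by
            apply hMzero y w
            by_contra hcon
            push_neg at hcon
            apply hw
            rw [Finset.mem_image]
            refine ⟨⟨(w + ((y : ℕ) : ℤ)).toNat, by omega⟩, Finset.mem_univ _, ?_⟩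
            simp only []
            omega
          rw [hM0, zero_mul]
        rw [← Finset.sum_subset hsub himg,
          Finset.sum_image (fun a _ c _ h => Fin.ext (by omega))]
        exact Finset.sum_congr rfl fun s _ => by rw [hMθ s]
      have hiid : Jstar mx ms PX ≤ iidMI mx ms PX θy := Jstar_le mx ms PX hPX θy hθpmf
      have hiidval : iidMI mx ms PX θy
          = (-∑ w ∈ I, pr qy Zv2 w * Real.logb 2 (pr qy Zv2 w))
            + ∑ s, θy s * Real.logb 2 (θy s) := by
        rw [iidMI_eq mx ms PX hPX θy hθpmf]
        congr 1
        exact ent_eq_sum qy Zv2 hZrange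
      have expandA : -∑ w ∈ I, A y w * Real.logb 2 (A y w)
          = -(PY y * Real.logb 2 (PY y))
            + PY y * (-∑ w ∈ I, pr qy Zv2 w * Real.logb 2 (pr qy Zv2 w)) := by
        rw [Finset.sum_congr rfl fun w _ => by rw [hAR w, mul_logb_mul],
          Finset.sum_add_distrib]
        have e1 : ∑ w ∈ I, PY y * pr qy Zv2 w * Real.logb 2 (PY y)
            = PY y * Real.logb 2 (PY y) := by
          rw [Finset.sum_congr rfl (fun w _ => by ring :
            ∀ w ∈ I, PY y * pr qy Zv2 w * Real.logb 2 (PY y)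
              = (PY y * Real.logb 2 (PY y)) * pr qy Zv2 w),
            ← Finset.mul_sum, hRysum, mul_one]
        have e2 : ∑ w ∈ I, PY y * pr qy Zv2 w * Real.logb 2 (pr qy Zv2 w)
            = PY y * ∑ w ∈ I, pr qy Zv2 w * Real.logb 2 (pr qy Zv2 w) := by
          rw [Finset.mul_sum]
          exact Finset.sum_congr rfl fun w _ => by ring
        rw [e1, e2]
        ring
      have expandM : ∑ w ∈ I, Mf y w * Real.logb 2 (Mf y w)
          = PY y * Real.logb 2 (PY y)
            + PY y * ∑ s, θy s * Real.logb 2 (θy s) := by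
        rw [hMreindex,
          Finset.sum_congr rfl fun s _ => mul_logb_mul (PY y) (θy s),
          Finset.sum_add_distrib]
        have e1 : ∑ s : Fin (ms + 1), PY y * θy s * Real.logb 2 (PY y)
            = PY y * Real.logb 2 (PY y) := by
          rw [Finset.sum_congr rfl (fun s _ => by ring :
            ∀ s ∈ Finset.univ, PY y * θy s * Real.logb 2 (PY y)
              = (PY y * Real.logb 2 (PY y)) * θy s),
            ← Finset.mul_sum, hθpmf.2, mul_one]
        have e2 : ∑ s : Fin (ms + 1), PY y * θy s * Real.logb 2 (θy s)
            = PY y * ∑ s, θy s * Real.logb 2 (θy s) := by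
          rw [Finset.mul_sum]
          exact Finset.sum_congr rfl fun s _ => by ring
        rw [e1, e2]
      calc PY y * Jstar mx ms PX ≤ PY y * iidMI mx ms PX θy :=
            mul_le_mul_of_nonneg_left hiid (hPYnn y)
        _ = (-∑ w ∈ I, A y w * Real.logb 2 (A y w))
            + ∑ w ∈ I, Mf y w * Real.logb 2 (Mf y w) := by
            rw [hiidval, expandA, expandM]
            ring
  calc Jstar mx ms PX = ∑ y, PY y * Jstar mx ms PX := by
        rw [← Finset.sum_mul, hPYsum, one_mul]
    _ ≤ ∑ y, ((-∑ w ∈ I, A y w * Real.logb 2 (A y w))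
          + ∑ w ∈ I, Mf y w * Real.logb 2 (Mf y w)) := Finset.sum_le_sum fun y _ => key y
    _ = ent p (fun ω => (W2v ω, Yv ω)) - ent p (fun ω => (Wv ω, Yv ω)) := by
        rw [hE1, hE2, Finset.sum_add_distrib]
        rw [← Finset.sum_neg_distrib]
        ring

end SmartMeter
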